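/- A monic integer polynomial f(x) = x^4 + c_3 x^3 + c_2 x^2 + c_1 x + c_0 is a Cappell-Shaneson polynomial if and only if (c_0, c_1, c_2, c_3) equals, for some integer a, one of: (1, a−1, −2a, a), (1, a−1, −2a−2, a), (1, a+1, −2a−2, a), (1, a+1, −2a−4, a). -/

import Mathlib

open Polynomial

noncomputable def compound {R : Type*} [CommRing R] {n : ℕ} (k : ℕ)
    (A : Matrix (Fin n) (Fin n) R) :
    Matrix {s : Finset (Fin n) // s.card = k} {s : Finset (Fin n) // s.card = k} R :=
  Matrix.of fun s t =>
    (Matrix.of fun i j : Fin k =>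
      A (s.1.orderIsoOfFin s.2 i).1 (t.1.orderIsoOfFin t.2 j).1).det

/-- The companion matrix of a monic polynomial. -/
noncomputable def companion {R : Type*} [CommRing R] (f : Polynomial R) :
    Matrix (Fin f.natDegree) (Fin f.natDegree) R :=
  Matrix.of fun i j =>
    if (i : ℕ) + 1 = f.natDegree then -f.coeff j
    else if (j : ℕ) = (i : ℕ) + 1 then 1 else 0

/-- `f` is a Cappell-Shaneson polynomial: it is doubly monic (so its companion
matrix lies in `SL(n,ℤ)`) and the companion matrix `A` satisfies
`det(I - ⋀^k A) = ±1` for all `1 ≤ k ≤ ⌊n/2⌋`. -/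
def IsCSPoly (f : Polynomial ℤ) : Prop :=
  f.Monic ∧ f.coeff 0 = (-1) ^ f.natDegree ∧
    ∀ k, 1 ≤ k → k ≤ f.natDegree / 2 →
      (1 - compound k (companion f)).det = 1 ∨
      (1 - compound k (companion f)).det = -1

/-! ### Auxiliary machinery -/

/-- The degree-4 companion matrix with prescribed coefficients. -/
noncomputable def cmat (c : Fin 4 → ℤ) : Matrix (Fin 4) (Fin 4) ℤ :=
  Matrix.of fun i j =>
    if (i : ℕ) + 1 = 4 then -c j else if (j : ℕ) = (i : ℕ) + 1 then 1 else 0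

lemma det_compound_congr {n : ℕ} (h : n = 4) (k : ℕ)
    (A : Matrix (Fin n) (Fin n) ℤ) (B : Matrix (Fin 4) (Fin 4) ℤ)
    (hAB : ∀ i j, A i j = B (Fin.cast h i) (Fin.cast h j)) :
    (1 - compound k A).det = (1 - compound k B).det := by
  subst h
  obtain rfl : A = B := by ext i j; exact hAB i j
  rfl

lemma sm2 {a b : Fin 4} (h : a < b) : StrictMono ![a, b] := by
  intro i j hij
  fin_cases i <;> fin_cases j <;> simp_all

lemma oEmb2 (s : Finset (Fin 4)) (a b : Fin 4) (hab : a < b) (ha : a ∈ s) (hb : b ∈ s)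
    (h : s.card = 2) :
    s.orderEmbOfFin h 0 = a ∧ s.orderEmbOfFin h 1 = b := by
  have key : ![a, b] = s.orderEmbOfFin h := by
    refine Finset.orderEmbOfFin_unique h (fun x => ?_) (sm2 hab)
    fin_cases x <;> simpa
  exact ⟨(congrFun key 0).symm, (congrFun key 1).symm⟩

def S01 : Finset (Fin 4) := {0,1}
def S02 : Finset (Fin 4) := {0,2}
def S03 : Finset (Fin 4) := {0,3}
def S12 : Finset (Fin 4) := {1,2}
def S13 : Finset (Fin 4) := {1,3}
def S23 : Finset (Fin 4) := {2,3}

@[simp] lemma o01_0 (h : S01.card = 2) :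
    S01.orderEmbOfFin h 0 = 0 :=
  (oEmb2 _ 0 1 (by decide) (by decide) (by decide) h).1
@[simp] lemma o01_1 (h : S01.card = 2) :
    S01.orderEmbOfFin h 1 = 1 :=
  (oEmb2 _ 0 1 (by decide) (by decide) (by decide) h).2
@[simp] lemma o02_0 (h : S02.card = 2) :
    S02.orderEmbOfFin h 0 = 0 :=
  (oEmb2 _ 0 2 (by decide) (by decide) (by decide) h).1
@[simp] lemma o02_1 (h : S02.card = 2) :
    S02.orderEmbOfFin h 1 = 2 :=
  (oEmb2 _ 0 2 (by decide) (by decide) (by decide) h).2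
@[simp] lemma o03_0 (h : S03.card = 2) :
    S03.orderEmbOfFin h 0 = 0 :=
  (oEmb2 _ 0 3 (by decide) (by decide) (by decide) h).1
@[simp] lemma o03_1 (h : S03.card = 2) :
    S03.orderEmbOfFin h 1 = 3 :=
  (oEmb2 _ 0 3 (by decide) (by decide) (by decide) h).2
@[simp] lemma o12_0 (h : S12.card = 2) :
    S12.orderEmbOfFin h 0 = 1 :=
  (oEmb2 _ 1 2 (by decide) (by decide) (by decide) h).1
@[simp] lemma o12_1 (h : S12.card = 2) :
    S12.orderEmbOfFin h 1 = 2 :=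
  (oEmb2 _ 1 2 (by decide) (by decide) (by decide) h).2
@[simp] lemma o13_0 (h : S13.card = 2) :
    S13.orderEmbOfFin h 0 = 1 :=
  (oEmb2 _ 1 3 (by decide) (by decide) (by decide) h).1
@[simp] lemma o13_1 (h : S13.card = 2) :
    S13.orderEmbOfFin h 1 = 3 :=
  (oEmb2 _ 1 3 (by decide) (by decide) (by decide) h).2
@[simp] lemma o23_0 (h : S23.card = 2) :
    S23.orderEmbOfFin h 0 = 2 :=
  (oEmb2 _ 2 3 (by decide) (by decide) (by decide) h).1
@[simp] lemma o23_1 (h : S23.card = 2) :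
    S23.orderEmbOfFin h 1 = 3 :=
  (oEmb2 _ 2 3 (by decide) (by decide) (by decide) h).2

@[simp] lemma fv0 : ((0 : Fin 4) : ℕ) = 0 := rfl
@[simp] lemma fv1 : ((1 : Fin 4) : ℕ) = 1 := rfl
@[simp] lemma fv2 : ((2 : Fin 4) : ℕ) = 2 := rfl
@[simp] lemma fv3 : ((3 : Fin 4) : ℕ) = 3 := rfl

@[simp] lemma cs41 : Fin.castSucc (1 : Fin 4) = (1 : Fin 5) := rfl
@[simp] lemma cs42 : Fin.castSucc (2 : Fin 4) = (2 : Fin 5) := rfl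
@[simp] lemma cs43 : Fin.castSucc (3 : Fin 4) = (3 : Fin 5) := rfl
@[simp] lemma cs51 : Fin.castSucc (1 : Fin 5) = (1 : Fin 6) := rfl
@[simp] lemma cs52 : Fin.castSucc (2 : Fin 5) = (2 : Fin 6) := rfl
@[simp] lemma cs53 : Fin.castSucc (3 : Fin 5) = (3 : Fin 6) := rfl
@[simp] lemma cs31 : Fin.castSucc (1 : Fin 3) = (1 : Fin 4) := rfl
@[simp] lemma cs32 : Fin.castSucc (2 : Fin 3) = (2 : Fin 4) := rfl

lemma s62 : (2 : Fin 6) = (1 : Fin 5).succ := rfl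
lemma s63 : (3 : Fin 6) = (2 : Fin 5).succ := rfl
lemma s64 : (4 : Fin 6) = (3 : Fin 5).succ := rfl
lemma s65 : (5 : Fin 6) = (4 : Fin 5).succ := rfl
lemma s52 : (2 : Fin 5) = (1 : Fin 4).succ := rfl
lemma s53 : (3 : Fin 5) = (2 : Fin 4).succ := rfl
lemma s54 : (4 : Fin 5) = (3 : Fin 4).succ := rfl
lemma s42 : (2 : Fin 4) = (1 : Fin 3).succ := rfl
lemma s43 : (3 : Fin 4) = (2 : Fin 3).succ := rfl
lemma s32 : (2 : Fin 3) = (1 : Fin 2).succ := rfl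

def e1f : Fin 4 → {s : Finset (Fin 4) // s.card = 1} :=
  ![⟨{0}, by decide⟩, ⟨{1}, by decide⟩, ⟨{2}, by decide⟩, ⟨{3}, by decide⟩]

def e2f : Fin 6 → {s : Finset (Fin 4) // s.card = 2} :=
  ![⟨S01, by decide⟩, ⟨S02, by decide⟩, ⟨S03, by decide⟩,
    ⟨S12, by decide⟩, ⟨S13, by decide⟩, ⟨S23, by decide⟩]

noncomputable def e1 : Fin 4 ≃ {s : Finset (Fin 4) // s.card = 1} :=
  Equiv.ofBijective e1f (by decide)

noncomputable def e2 : Fin 6 ≃ {s : Finset (Fin 4) // s.card = 2} :=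
  Equiv.ofBijective e2f (by decide)

lemma sub_one_reindex {ι : Type*} [Fintype ι] [DecidableEq ι] {n : ℕ}
    (e : Fin n ≃ ι) (M : Matrix ι ι ℤ) :
    (1 - M).det = (1 - M.submatrix e e).det := by
  rw [← Matrix.det_submatrix_equiv_self e (1 - M)]
  congr 1
  ext i j
  simp [Matrix.submatrix_apply, Matrix.one_apply, EmbeddingLike.apply_eq_iff_eq]

set_option maxHeartbeats 1000000 in
lemma key1 (c : Fin 4 → ℤ) :
    (1 - compound 1 (cmat c)).det = 1 + c 3 + c 2 + c 1 + c 0 := by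
  rw [sub_one_reindex e1]
  have h : (1 : Matrix (Fin 4) (Fin 4) ℤ) - (compound 1 (cmat c)).submatrix e1 e1 =
      !![1,-1,0,0; 0,1,-1,0; 0,0,1,-1; c 0, c 1, c 2, 1 + c 3] := by
    ext i j
    rw [Matrix.sub_apply, Matrix.submatrix_apply]
    fin_cases i <;> fin_cases j <;>
      simp (config := { decide := true }) [compound, e1, e1f, cmat,
        Matrix.det_fin_one, Matrix.one_apply, Matrix.submatrix_apply, Matrix.sub_apply,
        s62, s63, s64, s65, s52, s53, s54, s42, s43, s32, Matrix.cons_val_succ]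
  rw [h]
  simp (config := { decide := true }) [Matrix.det_succ_row_zero, Fin.sum_univ_succ,
    Fin.succAbove]

set_option maxHeartbeats 4000000 in
set_option maxRecDepth 8000 in
lemma key2 (c : Fin 4 → ℤ) :
    (1 - compound 2 (cmat c)).det =
      1 - c 2 + c 1 * c 3 - c 1 ^ 2 - c 0 - c 0 * c 3 ^ 2 + 2 * c 0 * c 2
        + c 0 * c 1 * c 3 - c 0 ^ 2 - c 0 ^ 2 * c 2 + c 0 ^ 3 := by
  rw [sub_one_reindex e2]
  have h : (1 : Matrix (Fin 6) (Fin 6) ℤ) - (compound 2 (cmat c)).submatrix e2 e2 =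
      !![1,0,0,-1,0,0; 0,1,0,0,-1,0; -c 0,0,1,c 2,c 3,0; 0,0,0,1,0,-1;
         0,-c 0,0,-c 1,1,c 3; 0,0,-c 0,0,-c 1,1-c 2] := by
    ext i j
    rw [Matrix.sub_apply, Matrix.submatrix_apply]
    fin_cases i <;> fin_cases j <;>
      simp (config := { decide := true }) [compound, e2, e2f, cmat,
        Matrix.det_fin_two, Matrix.one_apply, Matrix.submatrix_apply, Matrix.sub_apply,
        s62, s63, s64, s65, s52, s53, s54, s42, s43, s32, Matrix.cons_val_succ]
  rw [h]
  simp (config := { decide := true }) [Matrix.det_succ_row_zero, Fin.sum_univ_succ,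
    Fin.succAbove]
  ring

theorem csPoly_degree_four_classification (f : Polynomial ℤ)
    (hmonic : f.Monic) (hdeg : f.natDegree = 4) :
    IsCSPoly f ↔ ∃ a : ℤ,
      (f.coeff 0, f.coeff 1, f.coeff 2, f.coeff 3) = (1, a - 1, -2 * a, a) ∨
      (f.coeff 0, f.coeff 1, f.coeff 2, f.coeff 3) = (1, a - 1, -2 * a - 2, a) ∨
      (f.coeff 0, f.coeff 1, f.coeff 2, f.coeff 3) = (1, a + 1, -2 * a - 2, a) ∨
      (f.coeff 0, f.coeff 1, f.coeff 2, f.coeff 3) = (1, a + 1, -2 * a - 4, a) := by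
  have hcomp : ∀ k, (1 - compound k (companion f)).det
      = (1 - compound k (cmat fun i => f.coeff i)).det := by
    intro k
    refine det_compound_congr hdeg k _ _ ?_
    intro i j
    simp [companion, cmat, hdeg]
  have K1 : (1 - compound 1 (companion f)).det
      = 1 + f.coeff 3 + f.coeff 2 + f.coeff 1 + f.coeff 0 := by
    rw [hcomp 1, key1]
    simp only [fv0, fv1, fv2, fv3]
  have K2 : (1 - compound 2 (companion f)).det
      = 1 - f.coeff 2 + f.coeff 1 * f.coeff 3 - f.coeff 1 ^ 2 - f.coeff 0
        - f.coeff 0 * f.coeff 3 ^ 2 + 2 * f.coeff 0 * f.coeff 2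
        + f.coeff 0 * f.coeff 1 * f.coeff 3 - f.coeff 0 ^ 2
        - f.coeff 0 ^ 2 * f.coeff 2 + f.coeff 0 ^ 3 := by
    rw [hcomp 2, key2]
    simp only [fv0, fv1, fv2, fv3]
  constructor
  · rintro ⟨-, h0, hk⟩
    rw [hdeg] at h0
    norm_num at h0
    have h1 := hk 1 (by norm_num) (by omega)
    have h2 := hk 2 (by norm_num) (by omega)
    rw [K1, h0] at h1
    rw [K2, h0] at h2
    have hd : (f.coeff 1 - f.coeff 3 - 1) * (f.coeff 1 - f.coeff 3 + 1) = 0 := by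
      rcases h2 with h2 | h2
      · nlinarith [sq_nonneg (f.coeff 1 - f.coeff 3)]
      · nlinarith [sq_nonneg (f.coeff 1 - f.coeff 3)]
    have hd' : f.coeff 1 - f.coeff 3 = 1 ∨ f.coeff 1 - f.coeff 3 = -1 := by
      rcases mul_eq_zero.mp hd with h | h
      · left; linarith
      · right; linarith
    refine ⟨f.coeff 3, ?_⟩
    simp only [Prod.mk.injEq]
    rcases hd' with hd'' | hd'' <;> rcases h1 with h1' | h1'
    · exact Or.inr (Or.inr (Or.inl ⟨h0, by omega, by omega, trivial⟩))
    · exact Or.inr (Or.inr (Or.inr ⟨h0, by omega, by omega, trivial⟩))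
    · exact Or.inl ⟨h0, by omega, by omega, trivial⟩
    · exact Or.inr (Or.inl ⟨h0, by omega, by omega, trivial⟩)
  · rintro ⟨a, h | h | h | h⟩ <;>
      simp only [Prod.mk.injEq] at h <;>
      obtain ⟨q0, q1, q2, q3⟩ := h <;>
      refine ⟨hmonic, by rw [hdeg, q0]; norm_num, ?_⟩ <;>
      intro k hk1 hk2 <;>
      rw [hdeg] at hk2 <;>
      norm_num at hk2 <;>
      interval_cases k <;>
      (first | rw [K1, q0, q1, q2, q3] | rw [K2, q0, q1, q2, q3]) <;>
      first
        | (left; ring1)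
        | (right; ring1)
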